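/- Let K = 2L ≥ 2 be even, let m ≥ 1 be an integer, set N = mK, and let α ∈ [0,2]. Let S_1 = { (s_1, 2m−s_1, s_2, 2m−s_2, …, s_L, 2m−s_L) : s_1, …, s_L ∈ {0,1,…,2m} } be the set of (2m+1)^L pure strategies that allocate exactly 2m to each consecutive pair of battlefields. Then the mixed strategy given by uniform randomization over S_1 induces uniform marginals and is a symmetric equilibrium strategy of the Colonel Blotto game B_α(N,K). -/

import Mathlib

open Finset

/-- The set of pure strategies: allocations of `N` units of the resource
over `K` battlefields. -/
def pureStrats (K N : ℕ) : Finset (Fin K → ℕ) := Finset.Nat.antidiagonalTuple K N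

/-- Payoff in the Colonel Blotto game `B_α(N,K)` of playing `s` against `t`:
`π(s,t) = Σ_k [1_{s_k > t_k} + (α/2)·1_{s_k = t_k}]`. -/
noncomputable def payoff (α : ℝ) {K : ℕ} (s t : Fin K → ℕ) : ℝ :=
  ∑ k, ((if t k < s k then (1 : ℝ) else 0) + α / 2 * (if s k = t k then 1 else 0))

/-- `σ` is a mixed strategy: a probability distribution on the pure strategies. -/
def IsMixed (K N : ℕ) (σ : (Fin K → ℕ) → ℝ) : Prop :=
  (∀ s, 0 ≤ σ s) ∧ (∀ s, s ∉ pureStrats K N → σ s = 0) ∧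
    ∑ s ∈ pureStrats K N, σ s = 1

/-- Expected payoff of the mixed strategy `σ` against the mixed strategy `τ`. -/
noncomputable def expPayoff (α : ℝ) (K N : ℕ) (σ τ : (Fin K → ℕ) → ℝ) : ℝ :=
  ∑ s ∈ pureStrats K N, ∑ t ∈ pureStrats K N, σ s * τ t * payoff α s t

/-- `(σA, σB)` is a mixed-strategy Nash equilibrium: both are mixed strategies and
neither player can strictly improve by a unilateral deviation. -/
def IsNashEq (α : ℝ) (K N : ℕ) (σA σB : (Fin K → ℕ) → ℝ) : Prop :=
  IsMixed K N σA ∧ IsMixed K N σB ∧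
    (∀ σ', IsMixed K N σ' → expPayoff α K N σ' σB ≤ expPayoff α K N σA σB) ∧
    (∀ τ', IsMixed K N τ' → expPayoff α K N τ' σA ≤ expPayoff α K N σB σA)

/-- The marginal distribution of `σ` at battlefield `k`, evaluated at `x`. -/
noncomputable def marginal (K N : ℕ) (σ : (Fin K → ℕ) → ℝ) (k : Fin K) (x : ℕ) : ℝ :=
  ∑ s ∈ (pureStrats K N).filter (fun s => s k = x), σ s

/-- `σ` induces uniform marginals on `{0,1,…,2m}` at every battlefield. -/
def UniformMarginals (K N m : ℕ) (σ : (Fin K → ℕ) → ℝ) : Prop :=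
  ∀ k x, marginal K N σ k x = if x ≤ 2 * m then (1 : ℝ) / (2 * m + 1) else 0

/- Uniform randomization over the set `S₁` of the `(2m+1)^L` pure strategies on
`K = 2L` battlefields that allocate `c l ≤ 2m` to battlefield `2l` and `2m − c l`
to battlefield `2l+1`, for each of the `L` consecutive pairs of battlefields. -/
open Classical in
noncomputable def sigma1 (L m : ℕ) : (Fin (2 * L) → ℕ) → ℝ := fun s =>
  if ∃ c : Fin L → ℕ, (∀ l, c l ≤ 2 * m) ∧
      s = fun k : Fin (2 * L) =>
        if (k : ℕ) % 2 = 0 then c ⟨(k : ℕ) / 2, by have := k.isLt; omega⟩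
        else 2 * m - c ⟨(k : ℕ) / 2, by have := k.isLt; omega⟩
  then (1 : ℝ) / (2 * m + 1) ^ L else 0

namespace Blotto

variable (L m : ℕ)

def strat (c : Fin L → ℕ) : Fin (2 * L) → ℕ := fun k : Fin (2 * L) =>
  if (k : ℕ) % 2 = 0 then c ⟨(k : ℕ) / 2, by have := k.isLt; omega⟩
  else 2 * m - c ⟨(k : ℕ) / 2, by have := k.isLt; omega⟩

def box : Finset (Fin L → ℕ) := Fintype.piFinset (fun _ => Finset.range (2 * m + 1))

lemma mem_box {c : Fin L → ℕ} : c ∈ box L m ↔ ∀ l, c l ≤ 2 * m := by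
  simp [box, Fintype.mem_piFinset, Nat.lt_succ_iff]

open Classical in
lemma sigma1_eq (s : Fin (2 * L) → ℕ) :
    sigma1 L m s = if ∃ c, (∀ l, c l ≤ 2 * m) ∧ s = strat L m c
      then (1 : ℝ) / (2 * m + 1) ^ L else 0 := rfl

lemma strat_le (c : Fin L → ℕ) (hc : c ∈ box L m) (k : Fin (2 * L)) :
    strat L m c k ≤ 2 * m := by
  rw [mem_box] at hc
  unfold strat
  split
  · exact hc _
  · omega

lemma sum_pair {M : Type*} [AddCommMonoid M] (h : ℕ → M) (n : ℕ) :
    ∑ k ∈ range (2 * n), h k = ∑ l ∈ range n, (h (2 * l) + h (2 * l + 1)) := by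
  induction n with
  | zero => simp
  | succ n ih =>
      rw [show 2 * (n + 1) = (2 * n + 1) + 1 by ring, sum_range_succ, sum_range_succ,
        sum_range_succ, ih]
      abel

lemma sum_strat (c : Fin L → ℕ) (hc : c ∈ box L m) :
    ∑ k, strat L m c k = m * (2 * L) := by
  rw [mem_box] at hc
  set c' : ℕ → ℕ := fun j => if h : j < L then c ⟨j, h⟩ else 0 with hc'
  have key : ∀ k : Fin (2 * L), strat L m c k =
      (fun j : ℕ => if j % 2 = 0 then c' (j / 2) else 2 * m - c' (j / 2)) (k : ℕ) := by
    intro k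
    have hk : (k : ℕ) / 2 < L := by have := k.isLt; omega
    simp only [strat, hc', dif_pos hk]
  calc ∑ k, strat L m c k
      = ∑ j ∈ range (2 * L), (fun j : ℕ => if j % 2 = 0 then c' (j / 2) else 2 * m - c' (j / 2)) j := by
        rw [← Fin.sum_univ_eq_sum_range]
        exact Finset.sum_congr rfl fun k _ => key k
    _ = ∑ l ∈ range L, ((if (2 * l) % 2 = 0 then c' ((2 * l) / 2) else 2 * m - c' ((2 * l) / 2))
          + (if (2 * l + 1) % 2 = 0 then c' ((2 * l + 1) / 2) else 2 * m - c' ((2 * l + 1) / 2))) :=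
        sum_pair _ L
    _ = ∑ l ∈ range L, (2 * m) := by
        refine Finset.sum_congr rfl fun l hl => ?_
        rw [mem_range] at hl
        have h1 : (2 * l) % 2 = 0 := by omega
        have h2 : (2 * l + 1) % 2 = 1 := by omega
        have h3 : (2 * l) / 2 = l := by omega
        have h4 : (2 * l + 1) / 2 = l := by omega
        rw [h1, h2, h3, h4]
        norm_num
        simp only [hc', dif_pos hl]
        have := hc ⟨l, hl⟩
        omega
    _ = m * (2 * L) := by rw [sum_const, card_range]; ring

lemma strat_mem_pureStrats (c : Fin L → ℕ) (hc : c ∈ box L m) :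
    strat L m c ∈ pureStrats (2 * L) (m * (2 * L)) := by
  rw [pureStrats, Finset.Nat.mem_antidiagonalTuple]
  exact sum_strat L m c hc

lemma strat_inj (c₁ c₂ : Fin L → ℕ) (h : strat L m c₁ = strat L m c₂) : c₁ = c₂ := by
  funext l
  have hl2 : 2 * (l : ℕ) < 2 * L := by have := l.isLt; omega
  have := congrFun h ⟨2 * (l : ℕ), hl2⟩
  simp only [strat] at this
  have hmod : (2 * (l : ℕ)) % 2 = 0 := by omega
  rw [if_pos hmod, if_pos hmod] at this
  have hfin : (⟨(2 * (l : ℕ)) / 2, by omega⟩ : Fin L) = l := by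
    apply Fin.ext
    show 2 * (l : ℕ) / 2 = (l : ℕ)
    omega
  rwa [hfin] at this

lemma sigma1_strat (c : Fin L → ℕ) (hc : c ∈ box L m) :
    sigma1 L m (strat L m c) = (1 : ℝ) / (2 * m + 1) ^ L := by
  rw [sigma1_eq, if_pos ⟨c, (mem_box L m).mp hc, rfl⟩]

lemma sigma1_eq_zero (s : Fin (2 * L) → ℕ) (hs : s ∉ (box L m).image (strat L m)) :
    sigma1 L m s = 0 := by
  rw [sigma1_eq, if_neg]
  rintro ⟨c, hc, rfl⟩
  exact hs (Finset.mem_image.mpr ⟨c, (mem_box L m).mpr hc, rfl⟩)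

lemma transfer (g : (Fin (2 * L) → ℕ) → ℝ) :
    ∑ s ∈ pureStrats (2 * L) (m * (2 * L)), sigma1 L m s * g s
      = ∑ c ∈ box L m, (1 : ℝ) / (2 * m + 1) ^ L * g (strat L m c) := by
  have hsub : (box L m).image (strat L m) ⊆ pureStrats (2 * L) (m * (2 * L)) := by
    intro s hs
    rcases Finset.mem_image.mp hs with ⟨c, hc, rfl⟩
    exact strat_mem_pureStrats L m c hc
  rw [← Finset.sum_subset hsub (fun s _ hs => by rw [sigma1_eq_zero L m s hs, zero_mul])]
  rw [Finset.sum_image (fun x hx y hy h => strat_inj L m x y h)]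
  exact Finset.sum_congr rfl fun c hc => by rw [sigma1_strat L m c hc]

lemma card_box : (box L m).card = (2 * m + 1) ^ L := by
  simp [box, Fintype.card_piFinset]

lemma box_sum_coord (l0 : Fin L) (g : ℕ → ℝ) :
    ∑ c ∈ box L m, g (c l0) = (2 * m + 1 : ℝ) ^ (L - 1) * ∑ y ∈ range (2 * m + 1), g y := by
  classical
  set f : Fin L → ℕ → ℝ := fun l x => if l = l0 then g x else 1 with hf
  have h1 : ∀ c : Fin L → ℕ, g (c l0) = ∏ l, f l (c l) := by
    intro c
    rw [← Finset.mul_prod_erase univ (fun l => f l (c l)) (mem_univ l0)]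
    have : ∏ l ∈ univ.erase l0, f l (c l) = 1 := by
      apply Finset.prod_eq_one
      intro l hl
      simp only [hf, if_neg (Finset.ne_of_mem_erase hl)]
    rw [this, mul_one]
    simp [hf]
  calc ∑ c ∈ box L m, g (c l0) = ∑ c ∈ box L m, ∏ l, f l (c l) :=
        Finset.sum_congr rfl fun c _ => h1 c
    _ = ∏ l, ∑ y ∈ range (2 * m + 1), f l y := (Finset.prod_univ_sum _ _).symm
    _ = (2 * m + 1 : ℝ) ^ (L - 1) * ∑ y ∈ range (2 * m + 1), g y := by
        rw [← Finset.mul_prod_erase univ _ (mem_univ l0)]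
        have h2 : ∀ l ∈ univ.erase l0, ∑ y ∈ range (2 * m + 1), f l y = (2 * m + 1 : ℝ) := by
          intro l hl
          simp only [hf, if_neg (Finset.ne_of_mem_erase hl)]
          rw [Finset.sum_const, card_range]
          push_cast; ring
        rw [Finset.prod_congr rfl h2, Finset.prod_const,
          Finset.card_erase_of_mem (mem_univ l0), card_univ, Fintype.card_fin]
        have h3 : ∑ y ∈ range (2 * m + 1), f l0 y = ∑ y ∈ range (2 * m + 1), g y := by
          refine Finset.sum_congr rfl fun y _ => ?_
          simp [hf]
        rw [h3]; ring

lemma box_sum_strat_coord (k : Fin (2 * L)) (g : ℕ → ℝ) :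
    ∑ c ∈ box L m, g (strat L m c k)
      = (2 * m + 1 : ℝ) ^ (L - 1) * ∑ y ∈ range (2 * m + 1), g y := by
  have hk : (k : ℕ) / 2 < L := by have := k.isLt; omega
  set l0 : Fin L := ⟨(k : ℕ) / 2, hk⟩ with hl0
  by_cases h : (k : ℕ) % 2 = 0
  · have : ∀ c : Fin L → ℕ, strat L m c k = c l0 := fun c => by
      simp only [strat, if_pos h, hl0]
    rw [Finset.sum_congr rfl fun c _ => by rw [this c]]
    exact box_sum_coord L m l0 g
  · have : ∀ c : Fin L → ℕ, strat L m c k = 2 * m - c l0 := fun c => by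
      simp only [strat, if_neg h, hl0]
    rw [Finset.sum_congr rfl fun c _ => by rw [this c]]
    rw [box_sum_coord L m l0 (fun y => g (2 * m - y))]
    congr 1
    rw [← Finset.sum_range_reflect (fun y => g y) (2 * m + 1)]
    refine Finset.sum_congr rfl fun y hy => ?_
    have h5 : 2 * m + 1 - 1 - y = 2 * m - y := by omega
    rw [h5]


noncomputable def G (m : ℕ) (α : ℝ) (x : ℕ) : ℝ :=
  ∑ y ∈ range (2 * m + 1), ((if y < x then (1 : ℝ) else 0) + α / 2 * (if x = y then 1 else 0))

lemma G_le (α : ℝ) (hα : 0 ≤ α) (x : ℕ) : G m α x ≤ x + α / 2 := by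
  unfold G
  rw [Finset.sum_add_distrib]
  have h1 : ∑ y ∈ range (2 * m + 1), (if y < x then (1 : ℝ) else 0) ≤ x := by
    rw [Finset.sum_boole]
    have hsub : (range (2 * m + 1)).filter (fun y => y < x) ⊆ range x := by
      intro y hy
      rw [mem_range]
      exact (mem_filter.mp hy).2
    have := Finset.card_le_card hsub
    rw [card_range] at this
    exact_mod_cast this
  have h2 : ∑ y ∈ range (2 * m + 1), α / 2 * (if x = y then 1 else 0) ≤ α / 2 := by
    rw [← Finset.mul_sum, Finset.sum_ite_eq]
    split
    · rw [mul_one]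
    · rw [mul_zero]; positivity
  linarith

lemma G_eq (α : ℝ) (x : ℕ) (hx : x ≤ 2 * m) : G m α x = x + α / 2 := by
  unfold G
  rw [Finset.sum_add_distrib]
  have h1 : ∑ y ∈ range (2 * m + 1), (if y < x then (1 : ℝ) else 0) = x := by
    rw [Finset.sum_boole]
    have : (range (2 * m + 1)).filter (fun y => y < x) = range x := by
      ext y
      simp only [mem_filter, mem_range]
      omega
    rw [this, card_range]
  have h2 : ∑ y ∈ range (2 * m + 1), α / 2 * (if x = y then 1 else 0) = α / 2 := by
    rw [← Finset.mul_sum, Finset.sum_ite_eq, if_pos (mem_range.mpr (by omega)), mul_one]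
  rw [h1, h2]

lemma pow_split (hL : 1 ≤ L) : (2 * (m : ℝ) + 1) ^ L = (2 * m + 1) ^ (L - 1) * (2 * m + 1) := by
  rw [← pow_succ]
  congr 1
  omega

lemma F_eq (hL : 1 ≤ L) (α : ℝ) (s : Fin (2 * L) → ℕ) :
    ∑ t ∈ pureStrats (2 * L) (m * (2 * L)), sigma1 L m t * payoff α s t
      = (1 / (2 * m + 1)) * ∑ k, G m α (s k) := by
  rw [transfer L m (payoff α s), ← Finset.mul_sum]
  have h1 : ∑ c ∈ box L m, payoff α s (strat L m c)
      = ∑ k, ∑ c ∈ box L m, ((if strat L m c k < s k then (1 : ℝ) else 0)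
          + α / 2 * (if s k = strat L m c k then 1 else 0)) := by
    rw [Finset.sum_comm]
    rfl
  have h2 : ∀ k : Fin (2 * L), ∑ c ∈ box L m,
      ((if strat L m c k < s k then (1 : ℝ) else 0)
        + α / 2 * (if s k = strat L m c k then 1 else 0))
      = (2 * m + 1 : ℝ) ^ (L - 1) * G m α (s k) :=
    fun k => box_sum_strat_coord L m k
      (fun y => (if y < s k then (1 : ℝ) else 0) + α / 2 * (if s k = y then 1 else 0))
  rw [h1, Finset.sum_congr rfl (fun k _ => h2 k), ← Finset.mul_sum, pow_split L m hL]
  have hA : (0 : ℝ) < 2 * m + 1 := by positivity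
  have hB : (0 : ℝ) < (2 * (m : ℝ) + 1) ^ (L - 1) := by positivity
  field_simp

lemma expPayoff_eq (hL : 1 ≤ L) (α : ℝ) (σ' : (Fin (2 * L) → ℕ) → ℝ) :
    expPayoff α (2 * L) (m * (2 * L)) σ' (sigma1 L m)
      = ∑ s ∈ pureStrats (2 * L) (m * (2 * L)),
          σ' s * ((1 / (2 * m + 1)) * ∑ k, G m α (s k)) := by
  unfold expPayoff
  refine Finset.sum_congr rfl fun s _ => ?_
  rw [← F_eq L m hL α s, Finset.mul_sum]
  exact Finset.sum_congr rfl fun t _ => by ring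

lemma F_strat_eq (hL : 1 ≤ L) (α : ℝ) (c : Fin L → ℕ) (hc : c ∈ box L m) :
    (1 / (2 * (m : ℝ) + 1)) * ∑ k, G m α (strat L m c k)
      = (1 / (2 * m + 1)) * (m * (2 * L) + L * α) := by
  congr 1
  have h1 : ∀ k : Fin (2 * L), G m α (strat L m c k) = (strat L m c k : ℝ) + α / 2 :=
    fun k => G_eq m α _ (strat_le L m c hc k)
  rw [Finset.sum_congr rfl fun k _ => h1 k, Finset.sum_add_distrib, Finset.sum_const,
    card_univ, Fintype.card_fin]
  have h2 : ∑ k, (strat L m c k : ℝ) = ((m * (2 * L) : ℕ) : ℝ) := by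
    rw [← Nat.cast_sum, sum_strat L m c hc]
  rw [h2]
  push_cast
  ring

end Blotto

theorem stmt3 (L m N : ℕ) (hL : 1 ≤ L) (hm : 1 ≤ m) (hN : N = m * (2 * L))
    (α : ℝ) (hα : α ∈ Set.Icc (0 : ℝ) 2) :
    IsMixed (2 * L) N (sigma1 L m) ∧
    UniformMarginals (2 * L) N m (sigma1 L m) ∧
    IsNashEq α (2 * L) N (sigma1 L m) (sigma1 L m) := by
  subst hN
  obtain ⟨hα0, hα2⟩ := hα
  have hA : (0 : ℝ) < 2 * m + 1 := by positivity
  have hAL : ((2 : ℝ) * m + 1) ^ L ≠ 0 := by positivity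
  -- IsMixed
  have hmixed : IsMixed (2 * L) (m * (2 * L)) (sigma1 L m) := by
    refine ⟨?_, ?_, ?_⟩
    · intro s
      rw [Blotto.sigma1_eq]
      split
      · positivity
      · exact le_refl 0
    · intro s hs
      rw [Blotto.sigma1_eq, if_neg]
      rintro ⟨c, hc, rfl⟩
      exact hs (Blotto.strat_mem_pureStrats L m c ((Blotto.mem_box L m).mpr hc))
    · have h := Blotto.transfer L m (fun _ => (1 : ℝ))
      simp only [mul_one] at h
      rw [h, Finset.sum_const, Blotto.card_box, nsmul_eq_mul]
      push_cast
      rw [one_div, mul_inv_cancel₀ hAL]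
  -- Uniform marginals
  have hmarg : UniformMarginals (2 * L) (m * (2 * L)) m (sigma1 L m) := by
    intro k x
    unfold marginal
    rw [Finset.sum_filter]
    have h0 : ∑ s ∈ pureStrats (2 * L) (m * (2 * L)), (if s k = x then sigma1 L m s else 0)
        = ∑ s ∈ pureStrats (2 * L) (m * (2 * L)), sigma1 L m s * (if s k = x then (1 : ℝ) else 0) := by
      refine Finset.sum_congr rfl fun s _ => ?_
      split <;> simp
    rw [h0, Blotto.transfer L m (fun s => if s k = x then (1 : ℝ) else 0), ← Finset.mul_sum,
      Blotto.box_sum_strat_coord L m k (fun y => if y = x then (1 : ℝ) else 0),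
      Finset.sum_ite_eq']
    rw [Blotto.pow_split L m hL]
    by_cases hx : x ≤ 2 * m
    · rw [if_pos (mem_range.mpr (by omega)), if_pos hx]
      have hB : ((2 : ℝ) * m + 1) ^ (L - 1) ≠ 0 := by positivity
      field_simp
    · rw [if_neg (by rw [mem_range]; omega), if_neg hx]
      ring
  -- value
  set V : ℝ := (1 / (2 * m + 1)) * (m * (2 * L) + L * α) with hV
  have hFle : ∀ s ∈ pureStrats (2 * L) (m * (2 * L)),
      (1 / (2 * (m : ℝ) + 1)) * ∑ k, Blotto.G m α (s k) ≤ V := by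
    intro s hs
    have hsum : ∑ k, ((s k : ℝ)) = ((m * (2 * L) : ℕ) : ℝ) := by
      rw [pureStrats, Finset.Nat.mem_antidiagonalTuple] at hs
      rw [← Nat.cast_sum, hs]
    have hle : ∑ k, Blotto.G m α (s k) ≤ ∑ k, ((s k : ℝ) + α / 2) :=
      Finset.sum_le_sum fun k _ => Blotto.G_le m α hα0 (s k)
    have heq : ∑ k, ((s k : ℝ) + α / 2) = (m * (2 * L) : ℕ) + L * α := by
      rw [Finset.sum_add_distrib, hsum, Finset.sum_const, card_univ, Fintype.card_fin]
      push_cast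
      ring
    rw [hV]
    push_cast
    have : ∑ k, Blotto.G m α (s k) ≤ (m : ℝ) * (2 * L) + L * α := by
      rw [heq] at hle
      push_cast at hle
      linarith
    have h1A : (0 : ℝ) ≤ 1 / (2 * m + 1) := by positivity
    calc (1 / (2 * (m : ℝ) + 1)) * ∑ k, Blotto.G m α (s k)
        ≤ (1 / (2 * (m : ℝ) + 1)) * ((m : ℝ) * (2 * L) + L * α) :=
          mul_le_mul_of_nonneg_left this h1A
      _ = 1 / (2 * (m : ℝ) + 1) * ((m : ℝ) * (2 * ↑L) + ↑L * α) := by ring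
  have hdev : ∀ σ', IsMixed (2 * L) (m * (2 * L)) σ' →
      expPayoff α (2 * L) (m * (2 * L)) σ' (sigma1 L m) ≤ V := by
    intro σ' hσ'
    obtain ⟨hpos, _, hsum1⟩ := hσ'
    rw [Blotto.expPayoff_eq L m hL α σ']
    calc ∑ s ∈ pureStrats (2 * L) (m * (2 * L)),
          σ' s * ((1 / (2 * (m : ℝ) + 1)) * ∑ k, Blotto.G m α (s k))
        ≤ ∑ s ∈ pureStrats (2 * L) (m * (2 * L)), σ' s * V :=
          Finset.sum_le_sum fun s hs =>
            mul_le_mul_of_nonneg_left (hFle s hs) (hpos s)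
      _ = V := by rw [← Finset.sum_mul, hsum1, one_mul]
  have hself : expPayoff α (2 * L) (m * (2 * L)) (sigma1 L m) (sigma1 L m) = V := by
    rw [Blotto.expPayoff_eq L m hL α (sigma1 L m),
      Blotto.transfer L m (fun s => (1 / (2 * (m : ℝ) + 1)) * ∑ k, Blotto.G m α (s k))]
    have h1 : ∀ c ∈ Blotto.box L m,
        (1 : ℝ) / (2 * m + 1) ^ L * ((1 / (2 * (m : ℝ) + 1)) * ∑ k, Blotto.G m α (Blotto.strat L m c k))
          = (1 : ℝ) / (2 * m + 1) ^ L * V := by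
      intro c hc
      rw [Blotto.F_strat_eq L m hL α c hc]
    rw [Finset.sum_congr rfl h1, Finset.sum_const, Blotto.card_box, nsmul_eq_mul]
    push_cast
    rw [← mul_assoc, mul_one_div, div_self hAL, one_mul]
  refine ⟨hmixed, hmarg, hmixed, hmixed, ?_, ?_⟩
  · intro σ' hσ'
    rw [hself]
    exact hdev σ' hσ'
  · intro τ' hτ'
    rw [hself]
    exact hdev τ' hτ'
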